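/- Let K be a compact subset of the cube [0,1]^Γ. Then the following are equivalent: (1) there exists a lower semicontinuous quasi metric on K which fragments K (K is quasi Radon-Nikodým compact); (2) there exists a map σ : Γ → P such that the function f(x,y) = sup_{γ∈Γ} h^{σ(γ)}(|x_γ − y_γ|), which is automatically a lower semicontinuous quasi metric, fragments K. -/

import Mathlib

open Set Topology Cardinal

/-- A map `f : X × X → ℝ` fragments the topological space `X` if for every nonempty
subset `L` of `X` and every `ε > 0` there is a nonempty relatively open subset of `L`
of `f`-diameter less than `ε`. -/
def Fragments {X : Type*} [TopologicalSpace X] (f : X → X → ℝ) : Prop :=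
  ∀ L : Set X, L.Nonempty → ∀ ε : ℝ, 0 < ε →
    ∃ V : Set X, IsOpen V ∧ (V ∩ L).Nonempty ∧
      ∀ x ∈ V ∩ L, ∀ y ∈ V ∩ L, f x y < ε

/-- `f` (defined on the ambient space `X`) fragments the subset `K`. -/
def FragmentsOn {X : Type*} [TopologicalSpace X] (f : X → X → ℝ) (K : Set X) : Prop :=
  ∀ L : Set X, L ⊆ K → L.Nonempty → ∀ ε : ℝ, 0 < ε →
    ∃ V : Set X, IsOpen V ∧ (V ∩ L).Nonempty ∧
      ∀ x ∈ V ∩ L, ∀ y ∈ V ∩ L, f x y < ε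

/-- A quasi metric: nonnegative, symmetric, and vanishing exactly on the diagonal. -/
def IsQuasiMetric {X : Type*} (f : X → X → ℝ) : Prop :=
  (∀ x y, 0 ≤ f x y) ∧ (∀ x y, f x y = f y x) ∧ (∀ x y, f x y = 0 ↔ x = y)

/-- A metric (as a two-variable real function): symmetric, vanishing exactly on the
diagonal, and satisfying the triangle inequality. -/
def IsMetricFun {X : Type*} (d : X → X → ℝ) : Prop :=
  (∀ x y, d x y = d y x) ∧ (∀ x y, d x y = 0 ↔ x = y) ∧
    (∀ x y z, d x z ≤ d x y + d y z)

/-- Lower semicontinuity of a two-variable map for the product topology. -/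
def LSC {X : Type*} [TopologicalSpace X] (f : X → X → ℝ) : Prop :=
  LowerSemicontinuous (fun p : X × X => f p.1 p.2)

/-- `P`: the set of strictly increasing sequences of positive integers. -/
def Pset : Set (ℕ → ℕ) := {σ | StrictMono σ ∧ ∀ n, 0 < σ n}

/-- The function `h^σ : [0,∞) → ℝ`: `h^σ(0) = 0`, `h^σ(t) = 1/σ_n` whenever
`1/(n+1) < t ≤ 1/n` (so that `n = ⌊1/t⌋`), and `h^σ(t) = 1/σ_1` for `t > 1`. -/
noncomputable def hFun (σ : ℕ → ℕ) (t : ℝ) : ℝ :=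
  if t ≤ 0 then 0
  else if 1 < t then ((σ 1 : ℝ))⁻¹
  else ((σ (Nat.floor (1 / t)) : ℝ))⁻¹

lemma hFun_nonneg (σ : ℕ → ℕ) (t : ℝ) : 0 ≤ hFun σ t := by
  unfold hFun; split_ifs <;> positivity

lemma hFun_le_one {σ : ℕ → ℕ} (hσ : σ ∈ Pset) (t : ℝ) : hFun σ t ≤ 1 := by
  have h : ∀ m : ℕ, ((σ m : ℝ))⁻¹ ≤ 1 := by
    intro m
    have : (1 : ℝ) ≤ σ m := by exact_mod_cast hσ.2 m
    exact inv_le_one_of_one_le₀ this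
  unfold hFun; split_ifs with h1 h2
  · norm_num
  · exact h 1
  · exact h _

lemma hFun_pos {σ : ℕ → ℕ} (hσ : σ ∈ Pset) {t : ℝ} (ht : 0 < t) : 0 < hFun σ t := by
  have h : ∀ m : ℕ, (0:ℝ) < ((σ m : ℝ))⁻¹ := by
    intro m
    have : (0 : ℝ) < σ m := by exact_mod_cast hσ.2 m
    positivity
  unfold hFun; rw [if_neg (not_le.mpr ht)]; split_ifs with h2
  · exact h 1
  · exact h _

lemma floor_lt_aux {t : ℝ} (h0 : 0 < t) : 1 / ((Nat.floor (1/t) : ℝ) + 1) < t := by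
  have h2 : 1 / t < (Nat.floor (1/t) : ℝ) + 1 := Nat.lt_floor_add_one _
  have hp : (0:ℝ) < (Nat.floor (1/t) : ℝ) + 1 := by positivity
  rw [div_lt_iff₀ hp]
  rw [div_lt_iff₀ h0] at h2
  nlinarith

lemma one_le_floor_aux {t : ℝ} (h0 : 0 < t) (h1 : t ≤ 1) : 1 ≤ Nat.floor (1/t) := by
  apply Nat.le_floor
  rw [le_div_iff₀ h0]; push_cast; linarith

lemma hFun_eq {σ : ℕ → ℕ} {t : ℝ} (h0 : 0 < t) (h1 : t ≤ 1) :
    hFun σ t = ((σ (Nat.floor (1/t)) : ℝ))⁻¹ := by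
  unfold hFun; rw [if_neg (not_le.mpr h0), if_neg (not_lt.mpr h1)]

lemma hFun_ge {σ : ℕ → ℕ} (hσ : σ ∈ Pset) {n : ℕ} (hn : 1 ≤ n) {t : ℝ}
    (ht : 1 / ((n:ℝ) + 1) < t) : ((σ n : ℝ))⁻¹ ≤ hFun σ t := by
  have h0 : 0 < t := lt_trans (by positivity) ht
  have hmle : ∀ m : ℕ, m ≤ n → ((σ n : ℝ))⁻¹ ≤ ((σ m : ℝ))⁻¹ := by
    intro m hm
    have h1 : (0:ℝ) < σ m := by exact_mod_cast hσ.2 m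
    have h2 : (σ m : ℝ) ≤ σ n := by exact_mod_cast hσ.1.monotone hm
    exact inv_anti₀ h1 h2
  rcases lt_or_ge 1 t with hgt | hle
  · rw [show hFun σ t = ((σ 1 : ℝ))⁻¹ by unfold hFun; rw [if_neg (not_le.mpr h0), if_pos hgt]]
    exact hmle 1 hn
  · rw [hFun_eq h0 hle]
    apply hmle
    have : 1 / t < (n:ℝ) + 1 := by
      rw [div_lt_iff₀ h0]
      rw [div_lt_iff₀ (by positivity : (0:ℝ) < (n:ℝ)+1)] at ht
      nlinarith
    have := Nat.floor_lt (by positivity : (0:ℝ) ≤ 1/t) |>.mpr (by exact_mod_cast this)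
    omega

lemma hFun_lsc {σ : ℕ → ℕ} (hσ : σ ∈ Pset) : LowerSemicontinuous (hFun σ) := by
  intro t0 y hy
  rcases le_or_gt t0 0 with h0 | h0
  · have h : hFun σ t0 = 0 := by unfold hFun; rw [if_pos h0]
    rw [h] at hy
    filter_upwards with t
    exact lt_of_lt_of_le hy (hFun_nonneg σ t)
  rcases lt_or_ge 1 t0 with h1 | h1
  · have h : hFun σ t0 = ((σ 1 : ℝ))⁻¹ := by
      unfold hFun; rw [if_neg (not_le.mpr h0), if_pos h1]
    have hmem : t0 ∈ Ioi (1/(((1:ℕ):ℝ)+1)) := by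
      simp only [mem_Ioi]; push_cast; linarith
    filter_upwards [isOpen_Ioi.mem_nhds hmem] with t ht
    exact lt_of_lt_of_le (h ▸ hy) (hFun_ge hσ le_rfl ht)
  · set n := Nat.floor (1/t0) with hn
    have hn1 : 1 ≤ n := one_le_floor_aux h0 h1
    have hmem : t0 ∈ Ioi (1/((n:ℝ)+1)) := floor_lt_aux h0
    have heq : hFun σ t0 = ((σ n : ℝ))⁻¹ := hFun_eq h0 h1
    filter_upwards [isOpen_Ioi.mem_nhds hmem] with t ht
    exact lt_of_lt_of_le (heq ▸ hy) (hFun_ge hσ hn1 ht)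

/-- For a compact subset `K` of the cube `[0,1]^Γ`, `K` is quasi Radon-Nikodým if and
only if there is `σ : Γ → P` such that `f(x,y) = sup_γ h^{σ(γ)}(|x_γ - y_γ|)` fragments `K`. -/
theorem statement2 {Γ : Type*} (K : Set (Γ → ℝ))
    (hcube : ∀ x ∈ K, ∀ γ, x γ ∈ Set.Icc (0 : ℝ) 1) (hcomp : IsCompact K) :
    (∃ g : K → K → ℝ, IsQuasiMetric g ∧ LSC g ∧ Fragments g) ↔
      (∃ σ : Γ → (ℕ → ℕ), (∀ γ, σ γ ∈ Pset) ∧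
        FragmentsOn (fun x y => ⨆ γ, hFun (σ γ) |x γ - y γ|) K) := by
  constructor
  · rintro ⟨g, ⟨gnn, gsymm, gzero⟩, glsc, gfrag⟩
    haveI : CompactSpace K := isCompact_iff_compactSpace.mp hcomp
    have key : ∀ (γ : Γ) (n : ℕ), ∃ δ : ℝ, 0 < δ ∧
        ∀ x y : K, 1/((n:ℝ)+1) ≤ |x.1 γ - y.1 γ| → δ ≤ g x y := by
      intro γ n
      set C : Set (K × K) := {p | 1/((n:ℝ)+1) ≤ |p.1.1 γ - p.2.1 γ|} with hCdef
      have hcont : Continuous fun p : K × K => |p.1.1 γ - p.2.1 γ| :=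
        (((continuous_apply γ).comp (continuous_subtype_val.comp continuous_fst)).sub
          ((continuous_apply γ).comp (continuous_subtype_val.comp continuous_snd))).abs
      have hCclosed : IsClosed C := isClosed_le continuous_const hcont
      have hCcomp : IsCompact C := hCclosed.isCompact
      have hopen : ∀ m : ℕ, IsOpen {p : K × K | 1/((m:ℝ)+1) < g p.1 p.2} := by
        intro m
        exact glsc.isOpen_preimage (1/((m:ℝ)+1))
      have hcover : C ⊆ ⋃ m : ℕ, {p : K × K | 1/((m:ℝ)+1) < g p.1 p.2} := by
        intro p hp
        have hne : p.1 ≠ p.2 := by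
          intro h
          have : (0:ℝ) < 1/((n:ℝ)+1) := by positivity
          rw [hCdef] at hp
          simp only [mem_setOf_eq, h, sub_self, abs_zero] at hp
          linarith
        have hgpos : 0 < g p.1 p.2 :=
          lt_of_le_of_ne (gnn _ _) fun h => hne ((gzero _ _).mp h.symm)
        obtain ⟨m, hm⟩ := exists_nat_one_div_lt hgpos
        exact mem_iUnion.mpr ⟨m, by exact_mod_cast hm⟩
      obtain ⟨s, hs⟩ := hCcomp.elim_finite_subcover _ hopen hcover
      set M := s.sup id with hM
      refine ⟨1/((M:ℝ)+1), by positivity, ?_⟩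
      intro x y hxy
      have hmem : (x, y) ∈ C := hxy
      obtain ⟨m, hm, hminC⟩ := mem_iUnion₂.mp (hs hmem)
      have hmM : m ≤ M := Finset.le_sup (f := id) hm
      have hle : 1/((M:ℝ)+1) ≤ 1/((m:ℝ)+1) := by
        apply one_div_le_one_div_of_le (by positivity)
        exact_mod_cast Nat.add_le_add_right hmM 1
      exact le_of_lt (lt_of_le_of_lt hle hminC)
    choose δ hδpos hδ using key
    set N : Γ → ℕ → ℕ := fun γ n => max 1 (Nat.ceil (1/δ γ n)) with hN
    set σ : Γ → ℕ → ℕ := fun γ n => n + 1 + (Finset.range (n+1)).sup (N γ) with hσdef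
    have hσP : ∀ γ, σ γ ∈ Pset := by
      intro γ
      constructor
      · apply strictMono_nat_of_lt_succ
        intro n
        have hsup : (Finset.range (n+1)).sup (N γ) ≤ (Finset.range (n+1+1)).sup (N γ) :=
          Finset.sup_mono (Finset.range_subset_range.mpr (by omega))
        simp only [hσdef]
        omega
      · intro n
        simp only [hσdef]
        omega
    have hinv : ∀ γ n, ((σ γ n : ℝ))⁻¹ ≤ δ γ n := by
      intro γ n
      have h1 : N γ n ≤ σ γ n := by
        have := Finset.le_sup (f := N γ) (Finset.mem_range.mpr (by omega : n < n + 1))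
        simp only [hσdef]
        omega
      have h2 : 1/δ γ n ≤ (σ γ n : ℝ) := by
        calc 1/δ γ n ≤ (Nat.ceil (1/δ γ n) : ℝ) := Nat.le_ceil _
        _ ≤ (N γ n : ℝ) := by exact_mod_cast le_max_right _ _
        _ ≤ (σ γ n : ℝ) := by exact_mod_cast h1
      have hσpos : (0:ℝ) < σ γ n := by
        have := (hσP γ).2 n
        exact_mod_cast this
      rw [inv_le_comm₀ hσpos (hδpos γ n), inv_eq_one_div]
      exact h2
    have hpt : ∀ (x) (hx : x ∈ K) (y) (hy : y ∈ K) (γ : Γ),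
        hFun (σ γ) |x γ - y γ| ≤ g ⟨x, hx⟩ ⟨y, hy⟩ := by
      intro x hx y hy γ
      set t := |x γ - y γ| with htdef
      rcases le_or_gt t 0 with h0 | h0
      · rw [show hFun (σ γ) t = 0 by unfold hFun; rw [if_pos h0]]
        exact gnn _ _
      · have ht1 : t ≤ 1 := by
          have h1 := hcube x hx γ
          have h2 := hcube y hy γ
          rw [htdef, abs_sub_le_iff]
          constructor <;> linarith [h1.1, h1.2, h2.1, h2.2]
        set n := Nat.floor (1/t) with hn
        have hlow : 1/((n:ℝ)+1) ≤ t := le_of_lt (floor_lt_aux h0)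
        have := hδ γ n ⟨x, hx⟩ ⟨y, hy⟩ hlow
        rw [hFun_eq h0 ht1]
        exact le_trans (hinv γ n) this
    refine ⟨σ, hσP, ?_⟩
    intro L hLK hLne ε hε
    set L' : Set K := {z : K | (z : Γ → ℝ) ∈ L} with hL'
    obtain ⟨l, hl⟩ := hLne
    obtain ⟨V', hV'open, hV'ne, hV'⟩ := gfrag L' ⟨⟨l, hLK hl⟩, hl⟩ ε hε
    obtain ⟨V, hVopen, hVeq⟩ := isOpen_induced_iff.mp hV'open
    refine ⟨V, hVopen, ?_, ?_⟩
    · obtain ⟨z, hzV, hzL⟩ := hV'ne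
      rw [← hVeq] at hzV
      exact ⟨z, hzV, hzL⟩
    · intro x hx y hy
      have hxK := hLK hx.2
      have hyK := hLK hy.2
      have hx' : (⟨x, hxK⟩ : K) ∈ V' ∩ L' := ⟨by rw [← hVeq]; exact hx.1, hx.2⟩
      have hy' : (⟨y, hyK⟩ : K) ∈ V' ∩ L' := ⟨by rw [← hVeq]; exact hy.1, hy.2⟩
      calc (⨆ γ, hFun (σ γ) |x γ - y γ|) ≤ g ⟨x, hxK⟩ ⟨y, hyK⟩ :=
            Real.iSup_le (fun γ => hpt x hxK y hyK γ) (gnn _ _)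
        _ < ε := hV' _ hx' _ hy'
  · rintro ⟨σ, hσP, hfrag⟩
    refine ⟨fun x y => ⨆ γ, hFun (σ γ) |x.1 γ - y.1 γ|, ⟨?_, ?_, ?_⟩, ?_, ?_⟩
    · intro x y
      exact Real.iSup_nonneg fun γ => hFun_nonneg _ _
    · intro x y
      simp only [abs_sub_comm]
    · intro x y
      constructor
      · intro h
        apply Subtype.ext; funext γ
        by_contra hne
        have ht : 0 < |x.1 γ - y.1 γ| := abs_pos.mpr (sub_ne_zero.mpr hne)
        have hb : BddAbove (Set.range fun γ => hFun (σ γ) |x.1 γ - y.1 γ|) :=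
          ⟨1, by rintro _ ⟨γ, rfl⟩; exact hFun_le_one (hσP γ) _⟩
        have hle := le_ciSup hb γ
        exact absurd (le_of_le_of_eq hle h) (not_le.mpr (hFun_pos (hσP γ) ht))
      · rintro rfl
        apply le_antisymm
        · apply Real.iSup_le _ le_rfl
          intro γ
          simp [hFun]
        · exact Real.iSup_nonneg fun γ => hFun_nonneg _ _
    · apply lowerSemicontinuous_ciSup
      · intro p
        exact ⟨1, by rintro _ ⟨γ, rfl⟩; exact hFun_le_one (hσP γ) _⟩
      · intro γ
        exact LowerSemicontinuous.comp (hFun_lsc (hσP γ))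
          ((((continuous_apply γ).comp (continuous_subtype_val.comp continuous_fst)).sub
            ((continuous_apply γ).comp (continuous_subtype_val.comp continuous_snd))).abs)
    · intro L hLne ε hε
      obtain ⟨V, hVopen, hVne, hV⟩ := hfrag (Subtype.val '' L)
        (by rintro _ ⟨z, _, rfl⟩; exact z.2) (hLne.image _) ε hε
      refine ⟨Subtype.val ⁻¹' V, hVopen.preimage continuous_subtype_val, ?_, ?_⟩
      · obtain ⟨v, hvV, z, hzL, rfl⟩ := hVne
        exact ⟨z, hvV, hzL⟩
      · intro x hx y hy
        exact hV x.1 ⟨hx.1, mem_image_of_mem _ hx.2⟩ y.1 ⟨hy.1, mem_image_of_mem _ hy.2⟩
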